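/- arXiv:1812.01746 — 4 statements merged into one kernel-verified Lean document; each statement's English description precedes it below -/
import Mathlib

section
/- Closed form of nonlinear DistFlow voltages. In a radial distribution network, any quadruple (P, Q, ν, ℓ) satisfying the nonlinear DistFlow power-conservation equations together with the voltage-drop equations ν_j = ν_i − 2(R_ij P_ij + X_ij Q_ij) + (R_ij² + X_ij²) ℓ_ij and ν_0 given, satisfies for every node j ∈ N: ν_j = ν̂_j − 2 Σ_{(k,l)∈E} (R̂_jl R_kl + X̂_jl X_kl) ℓ_kl + Σ_{(k,l)∈𝒫_j} (R_kl² + X_kl²) ℓ_kl, where ν̂_j is the LinDistFlow voltage for the same consumptions (pt, qt) and substation voltage ν_0. -/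
open Finset

/-- `b` is the parent of `a` in the child-labelled rooted tree described by `par`
(`par a = none` means that the parent of `a` is the substation node `0`). -/
def IsParent {V : Type*} (par : V → Option V) (a b : V) : Prop := par a = some b

/-- `b` is a weak ancestor of `a` : `b` lies on the path from the substation to `a`
(including `a` itself).  Equivalently `a ∈ T_b`, and the edge entering `b`
belongs to the root-path `𝒫_a`. -/
def Anc {V : Type*} (par : V → Option V) (a b : V) : Prop :=
  Relation.ReflTransGen (IsParent par) a b

/-- Acyclicity of the parent map, so that it describes a genuine (finite, radial) tree. -/
def Acyclic {V : Type*} (par : V → Option V) : Prop :=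
  ∀ v, ¬ Relation.TransGen (IsParent par) v v

open Classical in
/-- Sum of `f` over the subtree `T_j` rooted at `j` (equivalently, identifying each edge
with its child node, over the edges `E_j ∪ {(i,j)}`). -/
noncomputable def subtreeSum {V : Type*} [Fintype V] (par : V → Option V)
    (f : V → ℝ) (j : V) : ℝ :=
  ∑ k, if Anc par k j then f k else 0

open Classical in
/-- Common-path sum `R̂_{jk} = Σ_{e ∈ 𝒫_j ∩ 𝒫_k} R_e`. -/
noncomputable def commonSum {V : Type*} [Fintype V] (par : V → Option V)
    (R : V → ℝ) (j k : V) : ℝ :=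
  ∑ e, if Anc par j e ∧ Anc par k e then R e else 0

open Classical in
/-- Sum of `f` over the edges of the root path `𝒫_j`. -/
noncomputable def pathSum {V : Type*} [Fintype V] (par : V → Option V)
    (f : V → ℝ) (j : V) : ℝ :=
  ∑ e, if Anc par j e then f e else 0

open Classical in
/-- The children of `j`, as a finset. -/
noncomputable def childrenOf {V : Type*} [Fintype V] (par : V → Option V) (j : V) : Finset V :=
  Finset.univ.filter (fun k => par k = some j)

/-- LinDistFlow voltage `ν̂_j`, in closed form. -/
noncomputable def lpfVolt {V : Type*} [Fintype V] (par : V → Option V) (R X : V → ℝ)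
    (pt qt : V → ℝ) (ν0 : ℝ) (j : V) : ℝ :=
  ν0 - 2 * ∑ k, (commonSum par R j k * pt k + commonSum par X j k * qt k)

/-- The LinDistFlow (LPF) equations for flows `P, Q` and squared voltages `ν`,
with substation squared voltage `ν0`. -/
def IsLPF {V : Type*} [Fintype V] (par : V → Option V) (R X : V → ℝ) (pt qt : V → ℝ)
    (ν0 : ℝ) (P Q ν : V → ℝ) : Prop :=
  (∀ j, P j = (∑ k ∈ childrenOf par j, P k) + pt j) ∧
  (∀ j, Q j = (∑ k ∈ childrenOf par j, Q k) + qt j) ∧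
  (∀ j, ν j = (par j).elim ν0 ν - 2 * (R j * P j + X j * Q j))

section Aux

variable {V : Type*}

theorem my_not_anc_of_parent {par : V → Option V} (hacyc : Acyclic par) {i j : V}
    (h : par j = some i) : ¬ Anc par i j :=
  fun h' => hacyc j (Relation.TransGen.head' h h')

theorem my_anc_total {par : V → Option V} {k a b : V}
    (ha : Anc par k a) (hb : Anc par k b) : Anc par a b ∨ Anc par b a := by
  induction ha using Relation.ReflTransGen.head_induction_on generalizing b with
  | refl => exact .inl hb
  | head h' hca ih =>
    rcases hb.cases_head with rfl | ⟨d, hd, hdb⟩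
    · exact .inr (Relation.ReflTransGen.head h' hca)
    · rw [IsParent] at h' hd; rw [h'] at hd
      exact ih (Option.some_injective _ hd ▸ hdb)

theorem my_child_unique {par : V → Option V} (hacyc : Acyclic par) {j c c' k : V}
    (hc : par c = some j) (hc' : par c' = some j)
    (hk : Anc par k c) (hk' : Anc par k c') : c = c' := by
  have key : ∀ {x y : V}, par x = some j → par y = some j → Anc par x y → x = y := by
    intro x y hx hy h
    rcases h.cases_head with h1 | ⟨d, hd, hdb⟩
    · exact h1
    · rw [IsParent, hx] at hd
      exact absurd (Option.some_injective _ hd ▸ hdb) (my_not_anc_of_parent hacyc hy)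
  rcases my_anc_total hk hk' with h | h
  · exact key hc hc' h
  · exact (key hc' hc h).symm

theorem my_anc_root {par : V → Option V} {j e : V} (h : par j = none) :
    Anc par j e ↔ e = j := by
  constructor
  · intro ha
    rcases ha.cases_head with h1 | ⟨c, hc, _⟩
    · exact h1.symm
    · rw [IsParent, h] at hc; exact absurd hc (by simp)
  · rintro rfl; exact .refl

theorem my_anc_step {par : V → Option V} {i j e : V} (h : par j = some i) :
    Anc par j e ↔ e = j ∨ Anc par i e := by
  constructor
  · intro ha
    rcases ha.cases_head with h1 | ⟨c, hc, hce⟩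
    · exact .inl h1.symm
    · rw [IsParent, h] at hc
      exact .inr (Option.some_injective _ hc ▸ hce)
  · rintro (rfl | ha)
    · exact .refl
    · exact Relation.ReflTransGen.head h ha

theorem my_not_anc_self {par : V → Option V} (hacyc : Acyclic par) {i j : V}
    (h : par j = some i) : ¬ Anc par i j := my_not_anc_of_parent hacyc h

theorem my_wf (par : V → Option V) [Finite V] (hacyc : Acyclic par) :
    WellFounded (IsParent par) := by
  haveI : IsTrans V (Relation.TransGen (IsParent par)) := ⟨fun _ _ _ => .trans⟩
  haveI : IsIrrefl V (Relation.TransGen (IsParent par)) := ⟨hacyc⟩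
  exact Subrelation.wf (fun h => Relation.TransGen.single h)
    (Finite.wellFounded_of_trans_of_irrefl _)

theorem my_wf_flip (par : V → Option V) [Finite V] (hacyc : Acyclic par) :
    WellFounded (Function.swap (IsParent par)) := by
  haveI : IsTrans V (Relation.TransGen (Function.swap (IsParent par))) := ⟨fun _ _ _ => .trans⟩
  haveI : IsIrrefl V (Relation.TransGen (Function.swap (IsParent par))) :=
    ⟨fun v h => hacyc v (Relation.transGen_swap.mp h)⟩
  exact Subrelation.wf (fun h => Relation.TransGen.single h)
    (Finite.wellFounded_of_trans_of_irrefl _)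

open Classical Finset in
theorem my_subtree_decomp [Fintype V] {par : V → Option V} (hacyc : Acyclic par)
    (g : V → ℝ) (j : V) :
    subtreeSum par g j = g j + ∑ c ∈ childrenOf par j, subtreeSum par g c := by
  unfold subtreeSum
  rw [Finset.sum_comm]
  have inner : ∀ k : V, (∑ c ∈ childrenOf par j, if Anc par k c then g k else 0)
      = if Anc par k j ∧ k ≠ j then g k else 0 := by
    intro k
    by_cases hkj : Anc par k j ∧ k ≠ j
    · obtain ⟨hkj1, hkj2⟩ := hkj
      rcases hkj1.cases_tail with h1 | ⟨c, hkc, hcj⟩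
      · exact absurd h1.symm hkj2
      · have hmem : c ∈ childrenOf par j := by
          simp only [childrenOf, Finset.mem_filter]
          exact ⟨Finset.mem_univ c, hcj⟩
        have hothers : ∀ b ∈ childrenOf par j, b ≠ c →
            (if Anc par k b then g k else 0) = 0 := by
          intro b hb hbc
          simp only [childrenOf, Finset.mem_filter] at hb
          rw [if_neg]
          intro hkb
          exact hbc (my_child_unique hacyc hb.2 hcj hkb hkc)
        rw [Finset.sum_eq_single_of_mem c hmem hothers, if_pos (show Anc par k c from hkc), if_pos ⟨hkj1, hkj2⟩]
    · rw [if_neg hkj]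
      apply Finset.sum_eq_zero
      intro c hc
      simp only [childrenOf, Finset.mem_filter] at hc
      rw [if_neg]
      intro hkc
      refine hkj ⟨hkc.tail hc.2, ?_⟩
      rintro rfl
      exact my_not_anc_of_parent hacyc hc.2 hkc
  rw [Finset.sum_congr rfl fun k _ => inner k]
  have split : ∀ k : V, (if Anc par k j then g k else 0)
      = (if k = j then g k else 0) + (if Anc par k j ∧ k ≠ j then g k else 0) := by
    intro k
    by_cases h1 : k = j
    · subst h1; simp [Relation.ReflTransGen.refl, Anc]
    · by_cases h2 : Anc par k j <;> simp [h1, h2]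
  rw [Finset.sum_congr rfl fun k _ => split k, Finset.sum_add_distrib,
    Finset.sum_ite_eq' Finset.univ j g]
  simp

open Classical Finset in
theorem my_commonSum_root [Fintype V] {par : V → Option V} (R : V → ℝ) {j : V}
    (h : par j = none) (k : V) :
    commonSum par R j k = if Anc par k j then R j else 0 := by
  unfold commonSum
  have key : ∀ e : V, (if Anc par j e ∧ Anc par k e then R e else 0)
      = if e = j then (if Anc par k e then R e else 0) else 0 := by
    intro e
    rw [my_anc_root h]
    by_cases h1 : e = j <;> by_cases h2 : Anc par k e <;> simp [h1, h2]
  rw [Finset.sum_congr rfl fun e _ => key e,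
    Finset.sum_ite_eq' Finset.univ j (fun e => if Anc par k e then R e else 0)]
  simp

open Classical Finset in
theorem my_commonSum_step [Fintype V] {par : V → Option V} (hacyc : Acyclic par)
    (R : V → ℝ) {i j : V} (h : par j = some i) (k : V) :
    commonSum par R j k = commonSum par R i k + (if Anc par k j then R j else 0) := by
  unfold commonSum
  have key : ∀ e : V, (if Anc par j e ∧ Anc par k e then R e else 0)
      = (if Anc par i e ∧ Anc par k e then R e else 0)
        + (if e = j then (if Anc par k e then R e else 0) else 0) := by
    intro e
    rw [my_anc_step h]
    by_cases h1 : e = j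
    · subst h1
      have : ¬ Anc par i e := my_not_anc_of_parent hacyc h
      by_cases h2 : Anc par k e <;> simp [this, h2]
    · by_cases h2 : Anc par i e <;> by_cases h3 : Anc par k e <;> simp [h1, h2, h3]
  rw [Finset.sum_congr rfl fun e _ => key e, Finset.sum_add_distrib,
    Finset.sum_ite_eq' Finset.univ j (fun e => if Anc par k e then R e else 0)]
  simp

open Classical Finset in
theorem my_pathSum_root [Fintype V] {par : V → Option V} (f : V → ℝ) {j : V}
    (h : par j = none) : pathSum par f j = f j := by
  unfold pathSum
  rw [Finset.sum_congr rfl (fun e _ => by rw [my_anc_root h]),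
    Finset.sum_ite_eq' Finset.univ j f]
  simp

open Classical Finset in
theorem my_pathSum_step [Fintype V] {par : V → Option V} (hacyc : Acyclic par)
    (f : V → ℝ) {i j : V} (h : par j = some i) :
    pathSum par f j = f j + pathSum par f i := by
  unfold pathSum
  have key : ∀ e : V, (if Anc par j e then f e else 0)
      = (if e = j then f e else 0) + (if Anc par i e then f e else 0) := by
    intro e
    rw [my_anc_step h]
    by_cases h1 : e = j
    · subst h1
      have : ¬ Anc par i e := my_not_anc_of_parent hacyc h
      simp [this]
    · by_cases h2 : Anc par i e <;> simp [h1, h2]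
  rw [Finset.sum_congr rfl fun e _ => key e, Finset.sum_add_distrib,
    Finset.sum_ite_eq' Finset.univ j f]
  simp

end Aux

/-- **Closed form of nonlinear DistFlow voltages.**
Any `(P, Q, ν, ℓ)` satisfying the nonlinear DistFlow power-conservation equations and the
voltage-drop equations `ν_j = ν_i − 2(R_ij P_ij + X_ij Q_ij) + (R_ij² + X_ij²) ℓ_ij`
(with `ν_0` given) satisfies, for every node `j ∈ N`:
`ν_j = ν̂_j − 2 Σ_{(k,l)∈E} (R̂_jl R_kl + X̂_jl X_kl) ℓ_kl + Σ_{(k,l)∈𝒫_j} (R_kl² + X_kl²) ℓ_kl`,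
where `ν̂_j` is the LinDistFlow voltage for the same consumptions and substation voltage. -/
theorem npf_voltage_closed_form {V : Type*} [Fintype V] (par : V → Option V)
    (hacyc : Acyclic par) (R X : V → ℝ)
    (hR : ∀ e, 0 < R e) (hX : ∀ e, 0 < X e)
    (pt qt : V → ℝ) (ν0 : ℝ) (P Q ν ℓ : V → ℝ)
    (hP : ∀ j, P j = (∑ k ∈ childrenOf par j, P k) + pt j + R j * ℓ j)
    (hQ : ∀ j, Q j = (∑ k ∈ childrenOf par j, Q k) + qt j + X j * ℓ j)
    (hV : ∀ j, ν j = (par j).elim ν0 ν - 2 * (R j * P j + X j * Q j)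
        + (R j ^ 2 + X j ^ 2) * ℓ j) :
    ∀ j, ν j = lpfVolt par R X pt qt ν0 j
        - 2 * (∑ e, (commonSum par R j e * R e + commonSum par X j e * X e) * ℓ e)
        + pathSum par (fun e => (R e ^ 2 + X e ^ 2) * ℓ e) j := by
  classical
  have wfP := my_wf par hacyc
  have hPc : ∀ j, P j = subtreeSum par (fun k => pt k + R k * ℓ k) j := by
    intro j
    induction j using wfP.induction with
    | _ j ih =>
      rw [hP j, my_subtree_decomp hacyc,
        Finset.sum_congr rfl (fun c hc => ih c (by simpa [childrenOf, IsParent] using hc))]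
      ring
  have hQc : ∀ j, Q j = subtreeSum par (fun k => qt k + X k * ℓ k) j := by
    intro j
    induction j using wfP.induction with
    | _ j ih =>
      rw [hQ j, my_subtree_decomp hacyc,
        Finset.sum_congr rfl (fun c hc => ih c (by simpa [childrenOf, IsParent] using hc))]
      ring
  have wfF := my_wf_flip par hacyc
  intro j
  induction j using wfF.induction with
  | _ j ih =>
    set D : ℝ := ∑ k, ((if Anc par k j then R j else 0) * pt k
        + (if Anc par k j then X j else 0) * qt k) with hD
    set E : ℝ := ∑ e, ((if Anc par e j then R j else 0) * R e
        + (if Anc par e j then X j else 0) * X e) * ℓ e with hE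
    have hDE : D + E = R j * P j + X j * Q j := by
      rw [hPc j, hQc j]
      unfold subtreeSum
      rw [hD, hE, Finset.mul_sum, Finset.mul_sum, ← Finset.sum_add_distrib,
        ← Finset.sum_add_distrib]
      refine Finset.sum_congr rfl fun k _ => ?_
      split_ifs <;> ring
    rcases hpar : par j with _ | i
    · -- root case
      have eD : ∑ k, (commonSum par R j k * pt k + commonSum par X j k * qt k) = D := by
        rw [hD]
        refine Finset.sum_congr rfl fun k _ => ?_
        rw [my_commonSum_root R hpar, my_commonSum_root X hpar]
      have eE : ∑ e, (commonSum par R j e * R e + commonSum par X j e * X e) * ℓ e = E := by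
        rw [hE]
        refine Finset.sum_congr rfl fun e _ => ?_
        rw [my_commonSum_root R hpar, my_commonSum_root X hpar]
      rw [hV j, hpar]
      unfold lpfVolt
      rw [eD, eE, my_pathSum_root _ hpar]
      simp only [Option.elim]
      linarith [hDE]
    · -- step case
      have eD : ∑ k, (commonSum par R j k * pt k + commonSum par X j k * qt k)
          = (∑ k, (commonSum par R i k * pt k + commonSum par X i k * qt k)) + D := by
        rw [hD, ← Finset.sum_add_distrib]
        refine Finset.sum_congr rfl fun k _ => ?_
        rw [my_commonSum_step hacyc R hpar, my_commonSum_step hacyc X hpar]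
        ring
      have eE : ∑ e, (commonSum par R j e * R e + commonSum par X j e * X e) * ℓ e
          = (∑ e, (commonSum par R i e * R e + commonSum par X i e * X e) * ℓ e) + E := by
        rw [hE, ← Finset.sum_add_distrib]
        refine Finset.sum_congr rfl fun e _ => ?_
        rw [my_commonSum_step hacyc R hpar, my_commonSum_step hacyc X hpar]
        ring
      have hii : ν i = lpfVolt par R X pt qt ν0 i
          - 2 * (∑ e, (commonSum par R i e * R e + commonSum par X i e * X e) * ℓ e)
          + pathSum par (fun e => (R e ^ 2 + X e ^ 2) * ℓ e) i := ih i hpar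
      rw [hV j, hpar]
      simp only [Option.elim]
      rw [hii]
      unfold lpfVolt
      rw [eD, eE, my_pathSum_step hacyc _ hpar]
      linarith [hDE]
end

section
/- Monotonicity of DistFlow quantities in the line currents. Fix consumptions (pt, qt) and substation voltage ν_0 and regard (P, Q, ν) as functions of the vector ℓ = (ℓ_kl)_{(k,l)∈E} via the closed-form identities P_ij(ℓ) = P̂_ij + Σ_{(k,l)∈E_j∪{(i,j)}} R_kl ℓ_kl, Q_ij(ℓ) = Q̂_ij + Σ_{(k,l)∈E_j∪{(i,j)}} X_kl ℓ_kl, and ν_j(ℓ) = ν̂_j − 2Σ_{(k,l)∈E}(R̂_jl R_kl + X̂_jl X_kl) ℓ_kl + Σ_{(k,l)∈𝒫_j}(R_kl² + X_kl²) ℓ_kl. Then: (i) ∂P_ij/∂ℓ_kl = R_kl · 1{(k,l) ∈ E_j ∪ {(i,j)}} ≥ 0 and ∂Q_ij/∂ℓ_kl = X_kl · 1{(k,l) ∈ E_j ∪ {(i,j)}} ≥ 0; (ii) ∂ν_j/∂ℓ_kl = −2(R̂_jl R_kl + X̂_jl X_kl) + (R_kl² + X_kl²)·1{(k,l)∈𝒫_j}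 ≤ 0, and moreover ∂ν_j/∂ℓ_kl ≤ −(R_kl² + X_kl²) < 0 whenever (k,l) ∈ 𝒫_j. Consequently, if ℓ' ≥ ℓ componentwise then P(ℓ') ≥ P(ℓ), Q(ℓ') ≥ Q(ℓ), and ν(ℓ') ≤ ν(ℓ), with ν_j(ℓ') < ν_j(ℓ) whenever ℓ'_kl > ℓ_kl for some (k,l) ∈ 𝒫_j. -/
open Finset

/-- Nonlinear DistFlow line flow, as a function of the vector `ℓ` of squared line
currents (closed-form identity): `P_ij(ℓ) = P̂_ij + Σ_{(k,l)∈E_j∪{(i,j)}} R_kl ℓ_kl`.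
(The reactive flow `Q_ij(ℓ)` is obtained by instantiating `R := X`, `pt := qt`.) -/
noncomputable def npfFlowCur {V : Type*} [Fintype V] (par : V → Option V)
    (R pt : V → ℝ) (ℓ : V → ℝ) (j : V) : ℝ :=
  subtreeSum par pt j + subtreeSum par (fun e => R e * ℓ e) j

/-- Nonlinear DistFlow squared voltage, as a function of the vector `ℓ` of squared line
currents (closed-form identity):
`ν_j(ℓ) = ν̂_j − 2Σ_{(k,l)∈E}(R̂_jl R_kl + X̂_jl X_kl) ℓ_kl + Σ_{(k,l)∈𝒫_j}(R_kl²+X_kl²) ℓ_kl`. -/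
noncomputable def npfVoltCur {V : Type*} [Fintype V] (par : V → Option V)
    (R X pt qt : V → ℝ) (ν0 : ℝ) (ℓ : V → ℝ) (j : V) : ℝ :=
  lpfVolt par R X pt qt ν0 j
    - 2 * (∑ e, (commonSum par R j e * R e + commonSum par X j e * X e) * ℓ e)
    + pathSum par (fun e => (R e ^ 2 + X e ^ 2) * ℓ e) j

section Aux
open Classical
variable {V : Type*} [Fintype V] [DecidableEq V]

lemma fderiv_affine_combo (c : V → ℝ) (a : ℝ) (ℓ : V → ℝ) (e : V) :
    (fderiv ℝ (fun l : V → ℝ => a + ∑ k, c k * l k) ℓ) (Pi.single e 1) = c e := by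
  classical
  set L : (V → ℝ) →L[ℝ] ℝ :=
    ∑ k, (c k) • (ContinuousLinearMap.proj k : (V → ℝ) →L[ℝ] ℝ) with hL
  have hLa : ∀ l : V → ℝ, L l = ∑ k, c k * l k := by
    intro l
    simp [hL, ContinuousLinearMap.sum_apply, smul_eq_mul]
  have hf : (fun l : V → ℝ => a + ∑ k, c k * l k) = fun l => a + L l := by
    funext l; rw [hLa]
  have hd : HasFDerivAt (fun l : V → ℝ => a + L l) L ℓ :=
    (L.hasFDerivAt).const_add a
  rw [hf, hd.fderiv, hLa]
  simp [Pi.single_apply, mul_ite]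

lemma npfFlowCur_eq (par : V → Option V) (Rf ptf : V → ℝ) (j : V) (l : V → ℝ) :
    npfFlowCur par Rf ptf l j
      = subtreeSum par ptf j + ∑ k, (if Anc par k j then Rf k else 0) * l k := by
  unfold npfFlowCur subtreeSum
  congr 1
  exact Finset.sum_congr rfl fun k _ => by split_ifs <;> simp

lemma npfVoltCur_eq (par : V → Option V) (R X pt qt : V → ℝ) (ν0 : ℝ) (j : V) (l : V → ℝ) :
    npfVoltCur par R X pt qt ν0 l j
      = lpfVolt par R X pt qt ν0 j
        + ∑ e, (-2 * (commonSum par R j e * R e + commonSum par X j e * X e)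
            + (if Anc par j e then R e ^ 2 + X e ^ 2 else 0)) * l e := by
  unfold npfVoltCur pathSum
  rw [Finset.mul_sum, sub_eq_add_neg, ← Finset.sum_neg_distrib, add_assoc,
    ← Finset.sum_add_distrib]
  congr 1
  exact Finset.sum_congr rfl fun e _ => by split_ifs <;> ring

lemma commonSum_nonneg (par : V → Option V) (W : V → ℝ) (hW : ∀ k, 0 ≤ W k) (j e : V) :
    0 ≤ commonSum par W j e := by
  unfold commonSum
  exact Finset.sum_nonneg fun k _ => by split_ifs with h; exacts [hW k, le_refl 0]

lemma le_commonSum (par : V → Option V) (W : V → ℝ) (hW : ∀ k, 0 ≤ W k) (j e : V)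
    (h : Anc par j e) : W e ≤ commonSum par W j e := by
  unfold commonSum
  have hee : Anc par e e := Relation.ReflTransGen.refl
  have := Finset.single_le_sum (f := fun k => if Anc par j k ∧ Anc par e k then W k else 0)
    (fun k _ => by split_ifs with h; exacts [hW k, le_refl 0]) (Finset.mem_univ e)
  rwa [if_pos ⟨h, hee⟩] at this

end Aux
open Classical in
/-- **Monotonicity of DistFlow quantities in the line currents.**
Fix consumptions `(pt, qt)` and substation voltage `ν0`, and regard `(P, Q, ν)` as
functions of the current vector `ℓ` via the closed-form identities.  Then:
(i) `∂P_ij/∂ℓ_kl = R_kl·1{(k,l)∈E_j∪{(i,j)}} ≥ 0` and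
`∂Q_ij/∂ℓ_kl = X_kl·1{(k,l)∈E_j∪{(i,j)}} ≥ 0`;
(ii) `∂ν_j/∂ℓ_kl = −2(R̂_jl R_kl + X̂_jl X_kl) + (R_kl²+X_kl²)·1{(k,l)∈𝒫_j} ≤ 0`,
and `∂ν_j/∂ℓ_kl ≤ −(R_kl²+X_kl²) < 0` whenever `(k,l) ∈ 𝒫_j`;
(iii) if `ℓ ≤ ℓ'` componentwise then `P(ℓ) ≤ P(ℓ')`, `Q(ℓ) ≤ Q(ℓ')`, `ν(ℓ') ≤ ν(ℓ)`,
with `ν_j(ℓ') < ν_j(ℓ)` whenever `ℓ_kl < ℓ'_kl` for some `(k,l) ∈ 𝒫_j`. -/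
theorem distflow_monotone_in_currents {V : Type*} [Fintype V] [DecidableEq V]
    (par : V → Option V) (hacyc : Acyclic par)
    (R X : V → ℝ) (hR : ∀ e, 0 < R e) (hX : ∀ e, 0 < X e)
    (pt qt : V → ℝ) (ν0 : ℝ) :
    -- (i) sensitivity of the flows
    (∀ (ℓ : V → ℝ) (j e : V),
      (fderiv ℝ (fun l => npfFlowCur par R pt l j) ℓ) (Pi.single e 1)
          = (if Anc par e j then R e else 0) ∧
      0 ≤ (fderiv ℝ (fun l => npfFlowCur par R pt l j) ℓ) (Pi.single e 1) ∧
      (fderiv ℝ (fun l => npfFlowCur par X qt l j) ℓ) (Pi.single e 1)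
          = (if Anc par e j then X e else 0) ∧
      0 ≤ (fderiv ℝ (fun l => npfFlowCur par X qt l j) ℓ) (Pi.single e 1)) ∧
    -- (ii) sensitivity of the voltages
    (∀ (ℓ : V → ℝ) (j e : V),
      (fderiv ℝ (fun l => npfVoltCur par R X pt qt ν0 l j) ℓ) (Pi.single e 1)
          = -2 * (commonSum par R j e * R e + commonSum par X j e * X e)
              + (if Anc par j e then R e ^ 2 + X e ^ 2 else 0) ∧
      (fderiv ℝ (fun l => npfVoltCur par R X pt qt ν0 l j) ℓ) (Pi.single e 1) ≤ 0 ∧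
      (Anc par j e →
        (fderiv ℝ (fun l => npfVoltCur par R X pt qt ν0 l j) ℓ) (Pi.single e 1)
            ≤ -(R e ^ 2 + X e ^ 2) ∧
        (fderiv ℝ (fun l => npfVoltCur par R X pt qt ν0 l j) ℓ) (Pi.single e 1) < 0)) ∧
    -- (iii) componentwise monotonicity
    (∀ ℓ ℓ' : V → ℝ, ℓ ≤ ℓ' →
      (∀ j, npfFlowCur par R pt ℓ j ≤ npfFlowCur par R pt ℓ' j) ∧
      (∀ j, npfFlowCur par X qt ℓ j ≤ npfFlowCur par X qt ℓ' j) ∧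
      (∀ j, npfVoltCur par R X pt qt ν0 ℓ' j ≤ npfVoltCur par R X pt qt ν0 ℓ j) ∧
      (∀ j, (∃ e, Anc par j e ∧ ℓ e < ℓ' e) →
        npfVoltCur par R X pt qt ν0 ℓ' j < npfVoltCur par R X pt qt ν0 ℓ j)) := by
  classical
  set cV : V → V → ℝ := fun j e =>
    -2 * (commonSum par R j e * R e + commonSum par X j e * X e)
      + (if Anc par j e then R e ^ 2 + X e ^ 2 else 0) with hcV
  have hcV_nonpos : ∀ j e, cV j e ≤ 0 := by
    intro j e
    by_cases h : Anc par j e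
    · have h1 := le_commonSum par R (fun k => (hR k).le) j e h
      have h2 := le_commonSum par X (fun k => (hX k).le) j e h
      have hRe := (hR e).le; have hXe := (hX e).le
      simp only [hcV, if_pos h]
      nlinarith
    · have h1 := commonSum_nonneg par R (fun k => (hR k).le) j e
      have h2 := commonSum_nonneg par X (fun k => (hX k).le) j e
      have hRe := (hR e).le; have hXe := (hX e).le
      simp only [hcV, if_neg h]
      nlinarith
  have hcV_neg : ∀ j e, Anc par j e → cV j e ≤ -(R e ^ 2 + X e ^ 2) := by
    intro j e h
    have h1 := le_commonSum par R (fun k => (hR k).le) j e h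
    have h2 := le_commonSum par X (fun k => (hX k).le) j e h
    have hRe := (hR e).le; have hXe := (hX e).le
    simp only [hcV, if_pos h]
    nlinarith
  have hFfun : ∀ (Rf ptf : V → ℝ) (j : V),
      (fun l => npfFlowCur par Rf ptf l j)
        = fun l => subtreeSum par ptf j + ∑ k, (if Anc par k j then Rf k else 0) * l k :=
    fun Rf ptf j => funext fun l => npfFlowCur_eq par Rf ptf j l
  have hVfun : ∀ j : V,
      (fun l => npfVoltCur par R X pt qt ν0 l j)
        = fun l => lpfVolt par R X pt qt ν0 j + ∑ e, cV j e * l e :=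
    fun j => funext fun l => npfVoltCur_eq par R X pt qt ν0 j l
  refine ⟨?_, ?_, ?_⟩
  · intro ℓ j e
    rw [hFfun R pt j, hFfun X qt j, fderiv_affine_combo, fderiv_affine_combo]
    refine ⟨rfl, ?_, rfl, ?_⟩ <;> split_ifs with h
    exacts [(hR e).le, le_refl 0, (hX e).le, le_refl 0]
  · intro ℓ j e
    rw [hVfun j, fderiv_affine_combo]
    refine ⟨rfl, hcV_nonpos j e, fun h => ⟨hcV_neg j e h, ?_⟩⟩
    have := hcV_neg j e h
    nlinarith [hR e, hX e]
  · intro ℓ ℓ' hle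
    have hF : ∀ (Rf : V → ℝ), (∀ k, 0 < Rf k) → ∀ (ptf : V → ℝ) (j : V),
        npfFlowCur par Rf ptf ℓ j ≤ npfFlowCur par Rf ptf ℓ' j := by
      intro Rf hRf ptf j
      rw [npfFlowCur_eq, npfFlowCur_eq]
      refine add_le_add_right (Finset.sum_le_sum fun k _ => ?_) _
      refine mul_le_mul_of_nonneg_left (hle k) ?_
      split_ifs with h; exacts [(hRf k).le, le_refl 0]
    refine ⟨hF R hR pt, hF X hX qt, ?_, ?_⟩
    · intro j
      rw [npfVoltCur_eq, npfVoltCur_eq]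
      refine add_le_add_right (Finset.sum_le_sum fun e _ => ?_) _
      exact mul_le_mul_of_nonpos_left (hle e) (hcV_nonpos j e)
    · intro j ⟨e, he, hlt⟩
      rw [npfVoltCur_eq, npfVoltCur_eq]
      refine add_lt_add_right (Finset.sum_lt_sum
        (fun k _ => mul_le_mul_of_nonpos_left (hle k) (hcV_nonpos j k))
        ⟨e, Finset.mem_univ e, ?_⟩) _
      have hce : cV j e < 0 := by
        have := hcV_neg j e he; nlinarith [hR e, hX e]
      exact mul_lt_mul_of_neg_left hlt hce
end

section
/- Monotonicity of the backward-sweep current update in ℓ (key step in the proof of Proposition 1). With (P, Q, ν) regarded as functions of the line-current vector ℓ via the closed-form DistFlow identities, define f_ij(ℓ) = (P_ij(ℓ)² + Q_ij(ℓ)²) / ν_i(ℓ) for each edge (i,j) ∈ E. Suppose ℓ^u, ℓ^l ∈ ℝ^E with ℓ^u_kl > ℓ^l_kl ≥ 0 for every edge (k,l), that all LinDistFlow flows are nonnegative (P̂ ≥ 0, Q̂ ≥ 0, as holds under NRPF), and that ν_i(ℓ^u) > 0 for every node i. Then for every pair of edges (i,j) and (k,l): ∂f_ij/∂ℓ_kl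 evaluated at ℓ^u is at least its value evaluated at ℓ^l, with strict inequality whenever (k,l) ∈ E_j ∪ {(i,j)} or 𝒫_i ∩ 𝒫_l ≠ ∅. -/
open Finset

/-- The backward-sweep current update `f_ij(ℓ) = (P_ij(ℓ)² + Q_ij(ℓ)²)/ν_i(ℓ)`,
where `i` is the parent endpoint of the edge `(i,j)` (`ν_i = ν0` if `i` is the
substation), and `P, Q, ν` are regarded as functions of `ℓ` via the closed-form
DistFlow identities. -/
noncomputable def sweepRatio {V : Type*} [Fintype V] (par : V → Option V)
    (R X pt qt : V → ℝ) (ν0 : ℝ) (ℓ : V → ℝ) (j : V) : ℝ :=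
  (npfFlowCur par R pt ℓ j ^ 2 + npfFlowCur par X qt ℓ j ^ 2) /
    (par j).elim ν0 (npfVoltCur par R X pt qt ν0 ℓ)


/-! ### Auxiliary machinery for the proof -/

section SweepAux

variable {V : Type*} [Fintype V]

/-- The continuous linear map `ℓ ↦ Σ_k w k * ℓ k`. -/
noncomputable def lmapAux (w : V → ℝ) : (V → ℝ) →L[ℝ] ℝ :=
  ∑ k, w k • (ContinuousLinearMap.proj k : (V → ℝ) →L[ℝ] ℝ)

lemma lmapAux_apply (w ℓ : V → ℝ) : lmapAux w ℓ = ∑ k, w k * ℓ k := by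
  simp [lmapAux]

lemma lmapAux_single [DecidableEq V] (w : V → ℝ) (e : V) :
    lmapAux w (Pi.single e 1) = w e := by
  rw [lmapAux_apply]
  simp [Pi.single_apply]

lemma affine_ratio_deriv [DecidableEq V] (wP wQ cD : V → ℝ) (A B C : ℝ) (e : V)
    (ℓ0 : V → ℝ) (hD : C + lmapAux cD ℓ0 ≠ 0) :
    fderiv ℝ (fun l => ((A + lmapAux wP l) ^ 2 + (B + lmapAux wQ l) ^ 2) /
        (C + lmapAux cD l)) ℓ0 (Pi.single e 1)
      = (2 * (A + lmapAux wP ℓ0) * wP e + 2 * (B + lmapAux wQ ℓ0) * wQ e) /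
          (C + lmapAux cD ℓ0)
        + ((A + lmapAux wP ℓ0) ^ 2 + (B + lmapAux wQ ℓ0) ^ 2) * (-cD e) /
          (C + lmapAux cD ℓ0) ^ 2 := by
  have hP : HasFDerivAt (fun l : V → ℝ => A + lmapAux wP l) (lmapAux wP) ℓ0 :=
    (lmapAux wP).hasFDerivAt.const_add A
  have hQ : HasFDerivAt (fun l : V → ℝ => B + lmapAux wQ l) (lmapAux wQ) ℓ0 :=
    (lmapAux wQ).hasFDerivAt.const_add B
  have hDf : HasFDerivAt (fun l : V → ℝ => C + lmapAux cD l) (lmapAux cD) ℓ0 :=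
    (lmapAux cD).hasFDerivAt.const_add C
  have hinv : HasFDerivAt (fun l : V → ℝ => (C + lmapAux cD l)⁻¹)
      ((-((C + lmapAux cD ℓ0) ^ 2)⁻¹) • lmapAux cD) ℓ0 :=
    (hasDerivAt_inv hD).comp_hasFDerivAt ℓ0 hDf
  have hnum : HasFDerivAt
      (fun l : V → ℝ => (A + lmapAux wP l) * (A + lmapAux wP l)
        + (B + lmapAux wQ l) * (B + lmapAux wQ l))
      (((A + lmapAux wP ℓ0) • lmapAux wP + (A + lmapAux wP ℓ0) • lmapAux wP)
        + ((B + lmapAux wQ ℓ0) • lmapAux wQ + (B + lmapAux wQ ℓ0) • lmapAux wQ)) ℓ0 :=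
    (hP.mul hP).add (hQ.mul hQ)
  have hprod := hnum.mul hinv
  have heq : (fun l : V → ℝ => ((A + lmapAux wP l) ^ 2 + (B + lmapAux wQ l) ^ 2) /
      (C + lmapAux cD l))
      = fun l : V → ℝ => ((A + lmapAux wP l) * (A + lmapAux wP l)
        + (B + lmapAux wQ l) * (B + lmapAux wQ l)) * (C + lmapAux cD l)⁻¹ := by
    funext l
    rw [pow_two, pow_two, div_eq_mul_inv]
  rw [heq]
  erw [hprod.fderiv]
  simp only [ContinuousLinearMap.add_apply, ContinuousLinearMap.smul_apply,
    ContinuousLinearMap.coe_smul', Pi.smul_apply, lmapAux_single, smul_eq_mul]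
  field_simp
  ring

lemma ratio_le (a b c Pl Pu Ql Qu Dl Du : ℝ) (ha : 0 ≤ a) (hb : 0 ≤ b) (hc : 0 ≤ c)
    (hPl : 0 ≤ Pl) (hP : Pl ≤ Pu) (hQl : 0 ≤ Ql) (hQ : Ql ≤ Qu)
    (hDu : 0 < Du) (hD : Du ≤ Dl) :
    (2 * Pl * a + 2 * Ql * b) / Dl + (Pl ^ 2 + Ql ^ 2) * c / Dl ^ 2
      ≤ (2 * Pu * a + 2 * Qu * b) / Du + (Pu ^ 2 + Qu ^ 2) * c / Du ^ 2 := by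
  have hPu : 0 ≤ Pu := hPl.trans hP
  have hQu : 0 ≤ Qu := hQl.trans hQ
  have h1 : (2 * Pl * a + 2 * Ql * b) / Dl ≤ (2 * Pu * a + 2 * Qu * b) / Du :=
    div_le_div₀ (by nlinarith [mul_nonneg hPu ha, mul_nonneg hQu hb])
      (by nlinarith [mul_le_mul_of_nonneg_right hP ha, mul_le_mul_of_nonneg_right hQ hb])
      hDu hD
  have h2 : (Pl ^ 2 + Ql ^ 2) * c / Dl ^ 2 ≤ (Pu ^ 2 + Qu ^ 2) * c / Du ^ 2 :=
    div_le_div₀ (mul_nonneg (by positivity) hc)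
      (mul_le_mul_of_nonneg_right (by nlinarith) hc) (by positivity) (by nlinarith)
  linarith

lemma ratio_lt_left (a b c Pl Pu Ql Qu Dl Du : ℝ) (ha : 0 < a) (hb : 0 ≤ b) (hc : 0 ≤ c)
    (hPl : 0 ≤ Pl) (hP : Pl < Pu) (hQl : 0 ≤ Ql) (hQ : Ql ≤ Qu)
    (hDu : 0 < Du) (hD : Du ≤ Dl) :
    (2 * Pl * a + 2 * Ql * b) / Dl + (Pl ^ 2 + Ql ^ 2) * c / Dl ^ 2
      < (2 * Pu * a + 2 * Qu * b) / Du + (Pu ^ 2 + Qu ^ 2) * c / Du ^ 2 := by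
  have hPu : 0 ≤ Pu := hPl.trans hP.le
  have hQu : 0 ≤ Qu := hQl.trans hQ
  have h1 : (2 * Pl * a + 2 * Ql * b) / Dl < (2 * Pu * a + 2 * Qu * b) / Du :=
    div_lt_div₀
      (by nlinarith [mul_lt_mul_of_pos_right hP ha, mul_le_mul_of_nonneg_right hQ hb])
      hD (by nlinarith [mul_nonneg hPu ha.le, mul_nonneg hQu hb]) hDu
  have h2 : (Pl ^ 2 + Ql ^ 2) * c / Dl ^ 2 ≤ (Pu ^ 2 + Qu ^ 2) * c / Du ^ 2 :=
    div_le_div₀ (mul_nonneg (by positivity) hc)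
      (mul_le_mul_of_nonneg_right (by nlinarith) hc) (by positivity) (by nlinarith)
  linarith

lemma ratio_lt_right (a b c Pl Pu Ql Qu Dl Du : ℝ) (ha : 0 ≤ a) (hb : 0 ≤ b) (hc : 0 < c)
    (hPl : 0 ≤ Pl) (hP : Pl ≤ Pu) (hPu : 0 < Pu) (hQl : 0 ≤ Ql) (hQ : Ql ≤ Qu)
    (hDu : 0 < Du) (hD : Du < Dl) :
    (2 * Pl * a + 2 * Ql * b) / Dl + (Pl ^ 2 + Ql ^ 2) * c / Dl ^ 2
      < (2 * Pu * a + 2 * Qu * b) / Du + (Pu ^ 2 + Qu ^ 2) * c / Du ^ 2 := by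
  have hQu : 0 ≤ Qu := hQl.trans hQ
  have hDl : 0 < Dl := hDu.trans hD
  have h1 : (2 * Pl * a + 2 * Ql * b) / Dl ≤ (2 * Pu * a + 2 * Qu * b) / Du :=
    div_le_div₀ (by nlinarith [mul_nonneg (hPl.trans hP) ha, mul_nonneg hQu hb])
      (by nlinarith [mul_le_mul_of_nonneg_right hP ha, mul_le_mul_of_nonneg_right hQ hb])
      hDu hD.le
  have hSu : 0 < Pu ^ 2 + Qu ^ 2 := by nlinarith
  have h2a : (Pl ^ 2 + Ql ^ 2) * c / Dl ^ 2 ≤ (Pu ^ 2 + Qu ^ 2) * c / Dl ^ 2 :=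
    div_le_div_of_nonneg_right (mul_le_mul_of_nonneg_right (by nlinarith) hc.le) (by positivity)
  have h2b : (Pu ^ 2 + Qu ^ 2) * c / Dl ^ 2 < (Pu ^ 2 + Qu ^ 2) * c / Du ^ 2 :=
    div_lt_div_of_pos_left (mul_pos hSu hc) (by positivity) (by nlinarith)
  linarith

lemma mainAux [DecidableEq V] (wP wQ cD : V → ℝ) (A B C : ℝ)
    (hwP : ∀ k, 0 ≤ wP k) (hwQ : ∀ k, 0 ≤ wQ k) (hcD : ∀ k, cD k ≤ 0)
    (hA : 0 ≤ A) (hB : 0 ≤ B)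
    (ℓu ℓl : V → ℝ) (hℓ : ∀ k, 0 ≤ ℓl k ∧ ℓl k < ℓu k)
    (hDu : 0 < C + lmapAux cD ℓu) (e : V) :
    (fderiv ℝ (fun l => ((A + lmapAux wP l) ^ 2 + (B + lmapAux wQ l) ^ 2) /
        (C + lmapAux cD l)) ℓl (Pi.single e 1)
      ≤ fderiv ℝ (fun l => ((A + lmapAux wP l) ^ 2 + (B + lmapAux wQ l) ^ 2) /
        (C + lmapAux cD l)) ℓu (Pi.single e 1)) ∧
    (0 < wP e →
      fderiv ℝ (fun l => ((A + lmapAux wP l) ^ 2 + (B + lmapAux wQ l) ^ 2) /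
        (C + lmapAux cD l)) ℓl (Pi.single e 1)
      < fderiv ℝ (fun l => ((A + lmapAux wP l) ^ 2 + (B + lmapAux wQ l) ^ 2) /
        (C + lmapAux cD l)) ℓu (Pi.single e 1)) ∧
    (cD e < 0 → (∃ m, 0 < wP m) →
      fderiv ℝ (fun l => ((A + lmapAux wP l) ^ 2 + (B + lmapAux wQ l) ^ 2) /
        (C + lmapAux cD l)) ℓl (Pi.single e 1)
      < fderiv ℝ (fun l => ((A + lmapAux wP l) ^ 2 + (B + lmapAux wQ l) ^ 2) /
        (C + lmapAux cD l)) ℓu (Pi.single e 1)) := by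
  have hl0 : ∀ k, 0 ≤ ℓl k := fun k => (hℓ k).1
  have hlu : ∀ k, ℓl k ≤ ℓu k := fun k => (hℓ k).2.le
  have hu0 : ∀ k, 0 ≤ ℓu k := fun k => (hl0 k).trans (hlu k)
  have hDlu : C + lmapAux cD ℓu ≤ C + lmapAux cD ℓl := by
    rw [lmapAux_apply, lmapAux_apply]
    exact add_le_add_right (Finset.sum_le_sum fun k _ =>
      mul_le_mul_of_nonpos_left (hlu k) (hcD k)) C
  have hDl : 0 < C + lmapAux cD ℓl := hDu.trans_le hDlu
  have hPl0 : 0 ≤ A + lmapAux wP ℓl := by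
    rw [lmapAux_apply]
    exact add_nonneg hA (Finset.sum_nonneg fun k _ => mul_nonneg (hwP k) (hl0 k))
  have hQl0 : 0 ≤ B + lmapAux wQ ℓl := by
    rw [lmapAux_apply]
    exact add_nonneg hB (Finset.sum_nonneg fun k _ => mul_nonneg (hwQ k) (hl0 k))
  have hPlu : A + lmapAux wP ℓl ≤ A + lmapAux wP ℓu := by
    rw [lmapAux_apply, lmapAux_apply]
    exact add_le_add_right (Finset.sum_le_sum fun k _ =>
      mul_le_mul_of_nonneg_left (hlu k) (hwP k)) A
  have hQlu : B + lmapAux wQ ℓl ≤ B + lmapAux wQ ℓu := by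
    rw [lmapAux_apply, lmapAux_apply]
    exact add_le_add_right (Finset.sum_le_sum fun k _ =>
      mul_le_mul_of_nonneg_left (hlu k) (hwQ k)) B
  rw [affine_ratio_deriv wP wQ cD A B C e ℓl hDl.ne',
    affine_ratio_deriv wP wQ cD A B C e ℓu hDu.ne']
  refine ⟨ratio_le _ _ _ _ _ _ _ _ _ (hwP e) (hwQ e) (by linarith [hcD e])
      hPl0 hPlu hQl0 hQlu hDu hDlu, ?_, ?_⟩
  · intro hwPe
    have hPst : A + lmapAux wP ℓl < A + lmapAux wP ℓu := by
      rw [lmapAux_apply, lmapAux_apply]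
      exact add_lt_add_right (Finset.sum_lt_sum (fun k _ =>
        mul_le_mul_of_nonneg_left (hlu k) (hwP k))
        ⟨e, Finset.mem_univ e, mul_lt_mul_of_pos_left (hℓ e).2 hwPe⟩) A
    exact ratio_lt_left _ _ _ _ _ _ _ _ _ hwPe (hwQ e) (by linarith [hcD e])
      hPl0 hPst hQl0 hQlu hDu hDlu
  · rintro hcDe ⟨m, hm⟩
    have hDst : C + lmapAux cD ℓu < C + lmapAux cD ℓl := by
      rw [lmapAux_apply, lmapAux_apply]
      exact add_lt_add_right (Finset.sum_lt_sum (fun k _ =>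
        mul_le_mul_of_nonpos_left (hlu k) (hcD k))
        ⟨e, Finset.mem_univ e, mul_lt_mul_of_neg_left (hℓ e).2 hcDe⟩) C
    have hPu : 0 < A + lmapAux wP ℓu := by
      rw [lmapAux_apply]
      have h1 : 0 < wP m * ℓu m := mul_pos hm ((hℓ m).1.trans_lt (hℓ m).2)
      have h2 : wP m * ℓu m ≤ ∑ k, wP k * ℓu k :=
        Finset.single_le_sum (fun k _ => mul_nonneg (hwP k) (hu0 k)) (Finset.mem_univ m)
      linarith
    exact ratio_lt_right _ _ _ _ _ _ _ _ _ (hwP e) (hwQ e) (by linarith)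
      hPl0 hPlu hPu hQl0 hQlu hDu hDst

open Classical in
lemma flow_rep (par : V → Option V) (R pt : V → ℝ) (j : V) (l : V → ℝ) :
    npfFlowCur par R pt l j
      = subtreeSum par pt j + lmapAux (fun k => if Anc par k j then R k else 0) l := by
  rw [npfFlowCur, lmapAux_apply, subtreeSum]
  congr 1
  refine Finset.sum_congr rfl fun k _ => ?_
  by_cases h : Anc par k j <;> simp [h]

open Classical in
lemma volt_rep (par : V → Option V) (R X : V → ℝ) (νhat : ℝ) (i : V) (l : V → ℝ) :
    (νhat - 2 * (∑ e, (commonSum par R i e * R e + commonSum par X i e * X e) * l e)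
      + pathSum par (fun e => (R e ^ 2 + X e ^ 2) * l e) i)
      = νhat + lmapAux (fun k => (if Anc par i k then R k ^ 2 + X k ^ 2 else 0)
          - 2 * (commonSum par R i k * R k + commonSum par X i k * X k)) l := by
  rw [lmapAux_apply, pathSum]
  have hsum : (∑ k, ((if Anc par i k then R k ^ 2 + X k ^ 2 else 0)
      - 2 * (commonSum par R i k * R k + commonSum par X i k * X k)) * l k)
      = (∑ k, if Anc par i k then (R k ^ 2 + X k ^ 2) * l k else 0)
        - 2 * (∑ k, (commonSum par R i k * R k + commonSum par X i k * X k) * l k) := by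
    rw [Finset.mul_sum, ← Finset.sum_sub_distrib]
    refine Finset.sum_congr rfl fun k _ => ?_
    by_cases h : Anc par i k <;> simp [h] <;> ring
  rw [hsum]
  ring

end SweepAux

/-- **Monotonicity of the backward-sweep current update in `ℓ`** (key step in the proof of
Proposition 1).  Suppose `ℓ^u, ℓ^l ∈ ℝ^E` with `ℓ^u_kl > ℓ^l_kl ≥ 0` on every edge, all
LinDistFlow flows are nonnegative (as holds under NRPF), and `ν_i(ℓ^u) > 0` at every node
(with `ν0 > 0`).  Then for every pair of edges `(i,j)` and `(k,l)` the partial derivative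
`∂f_ij/∂ℓ_kl` evaluated at `ℓ^u` is at least its value at `ℓ^l`, with strict inequality
whenever `(k,l) ∈ E_j ∪ {(i,j)}` or `𝒫_i ∩ 𝒫_l ≠ ∅`. -/
theorem sweep_ratio_derivative_monotone {V : Type*} [Fintype V] [DecidableEq V]
    (par : V → Option V) (hacyc : Acyclic par)
    (R X : V → ℝ) (hR : ∀ e, 0 < R e) (hX : ∀ e, 0 < X e)
    (pt qt : V → ℝ) (ν0 : ℝ) (hν0 : 0 < ν0)
    (ℓu ℓl : V → ℝ) (hℓ : ∀ e, 0 ≤ ℓl e ∧ ℓl e < ℓu e)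
    (hPhat : ∀ j, 0 ≤ subtreeSum par pt j) (hQhat : ∀ j, 0 ≤ subtreeSum par qt j)
    (hν : ∀ i, 0 < npfVoltCur par R X pt qt ν0 ℓu i) :
    ∀ j e : V,
      (fderiv ℝ (fun l => sweepRatio par R X pt qt ν0 l j) ℓl) (Pi.single e 1)
        ≤ (fderiv ℝ (fun l => sweepRatio par R X pt qt ν0 l j) ℓu) (Pi.single e 1) ∧
      ((Anc par e j ∨ ∃ i f, par j = some i ∧ Anc par i f ∧ Anc par e f) →
        (fderiv ℝ (fun l => sweepRatio par R X pt qt ν0 l j) ℓl) (Pi.single e 1)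
          < (fderiv ℝ (fun l => sweepRatio par R X pt qt ν0 l j) ℓu) (Pi.single e 1))  := by
  classical
  intro j e
  have hjj : Anc par j j := Relation.ReflTransGen.refl
  have hwP : ∀ k, 0 ≤ (fun k => if Anc par k j then R k else 0) k := fun k => by
    dsimp only; split
    · exact (hR k).le
    · exact le_rfl
  have hwQ : ∀ k, 0 ≤ (fun k => if Anc par k j then X k else 0) k := fun k => by
    dsimp only; split
    · exact (hX k).le
    · exact le_rfl
  have hwPj : 0 < (fun k => if Anc par k j then R k else 0) j := by
    simpa [hjj] using hR j
  have hwPe : Anc par e j → 0 < (fun k => if Anc par k j then R k else 0) e := by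
    intro h; simpa [h] using hR e
  cases hpar : par j with
  | none =>
      have hfun : (fun l => sweepRatio par R X pt qt ν0 l j)
          = fun l => ((subtreeSum par pt j
                + lmapAux (fun k => if Anc par k j then R k else 0) l) ^ 2
              + (subtreeSum par qt j
                + lmapAux (fun k => if Anc par k j then X k else 0) l) ^ 2)
              / (ν0 + lmapAux (fun _ => (0 : ℝ)) l) := by
        funext l
        rw [sweepRatio, flow_rep, flow_rep, hpar]
        simp [lmapAux_apply]
      rw [hfun]
      have hDu : 0 < ν0 + lmapAux (fun _ => (0 : ℝ)) ℓu := by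
        simpa [lmapAux_apply] using hν0
      obtain ⟨h1, h2, -⟩ := mainAux (fun k => if Anc par k j then R k else 0)
        (fun k => if Anc par k j then X k else 0) (fun _ => (0 : ℝ))
        (subtreeSum par pt j) (subtreeSum par qt j) ν0 hwP hwQ
        (fun _ => le_rfl) (hPhat j) (hQhat j) ℓu ℓl hℓ hDu e
      refine ⟨h1, ?_⟩
      rintro (hanc | ⟨i, f, hij, -, -⟩)
      · exact h2 (hwPe hanc)
      · exact absurd hij (by simp)
  | some i =>
      have hcR : ∀ k, 0 ≤ commonSum par R i k := fun k =>
        Finset.sum_nonneg fun f _ => by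
          split
          · exact (hR f).le
          · exact le_rfl
      have hcX : ∀ k, 0 ≤ commonSum par X i k := fun k =>
        Finset.sum_nonneg fun f _ => by
          split
          · exact (hX f).le
          · exact le_rfl
      have hcRa : ∀ k, Anc par i k → R k ≤ commonSum par R i k := fun k hk => by
        have hkk : Anc par k k := Relation.ReflTransGen.refl
        have h := Finset.single_le_sum
          (f := fun f => if Anc par i f ∧ Anc par k f then R f else 0)
          (fun f _ => by
            split
            · exact (hR f).le
            · exact le_rfl) (Finset.mem_univ k)
        rw [commonSum]
        simpa [hk, hkk] using h
      have hcXa : ∀ k, Anc par i k → X k ≤ commonSum par X i k := fun k hk => by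
        have hkk : Anc par k k := Relation.ReflTransGen.refl
        have h := Finset.single_le_sum
          (f := fun f => if Anc par i f ∧ Anc par k f then X f else 0)
          (fun f _ => by
            split
            · exact (hX f).le
            · exact le_rfl) (Finset.mem_univ k)
        rw [commonSum]
        simpa [hk, hkk] using h
      have hcD : ∀ k, (fun k => (if Anc par i k then R k ^ 2 + X k ^ 2 else 0)
          - 2 * (commonSum par R i k * R k + commonSum par X i k * X k)) k ≤ 0 := by
        intro k
        dsimp only
        by_cases h : Anc par i k
        · have h3 : R k * R k ≤ commonSum par R i k * R k :=
            mul_le_mul_of_nonneg_right (hcRa k h) (hR k).le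
          have h4 : X k * X k ≤ commonSum par X i k * X k :=
            mul_le_mul_of_nonneg_right (hcXa k h) (hX k).le
          rw [if_pos h]
          nlinarith [sq_nonneg (R k), sq_nonneg (X k)]
        · have h3 : 0 ≤ commonSum par R i k * R k := mul_nonneg (hcR k) (hR k).le
          have h4 : 0 ≤ commonSum par X i k * X k := mul_nonneg (hcX k) (hX k).le
          rw [if_neg h]
          linarith
      have hfun : (fun l => sweepRatio par R X pt qt ν0 l j)
          = fun l => ((subtreeSum par pt j
                + lmapAux (fun k => if Anc par k j then R k else 0) l) ^ 2
              + (subtreeSum par qt j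
                + lmapAux (fun k => if Anc par k j then X k else 0) l) ^ 2)
              / (lpfVolt par R X pt qt ν0 i
                + lmapAux (fun k => (if Anc par i k then R k ^ 2 + X k ^ 2 else 0)
                  - 2 * (commonSum par R i k * R k + commonSum par X i k * X k)) l) := by
        funext l
        rw [sweepRatio, flow_rep, flow_rep, hpar]
        simp only [Option.elim]
        rw [npfVoltCur, volt_rep]
      have hDu : 0 < lpfVolt par R X pt qt ν0 i
          + lmapAux (fun k => (if Anc par i k then R k ^ 2 + X k ^ 2 else 0)
            - 2 * (commonSum par R i k * R k + commonSum par X i k * X k)) ℓu := by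
        have h := hν i
        rwa [npfVoltCur, volt_rep] at h
      rw [hfun]
      obtain ⟨h1, h2, h3⟩ := mainAux (fun k => if Anc par k j then R k else 0)
        (fun k => if Anc par k j then X k else 0)
        (fun k => (if Anc par i k then R k ^ 2 + X k ^ 2 else 0)
          - 2 * (commonSum par R i k * R k + commonSum par X i k * X k))
        (subtreeSum par pt j) (subtreeSum par qt j) (lpfVolt par R X pt qt ν0 i)
        hwP hwQ hcD (hPhat j) (hQhat j) ℓu ℓl hℓ hDu e
      refine ⟨h1, ?_⟩
      rintro (hanc | ⟨i', f, hij, hif, hef⟩)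
      · exact h2 (hwPe hanc)
      · obtain rfl : i = i' := Option.some.inj hij
        have hRf : R f ≤ commonSum par R i e := by
          have h := Finset.single_le_sum
            (f := fun g => if Anc par i g ∧ Anc par e g then R g else 0)
            (fun g _ => by
              split
              · exact (hR g).le
              · exact le_rfl) (Finset.mem_univ f)
          rw [commonSum]
          simpa [hif, hef] using h
        have hcDe : (fun k => (if Anc par i k then R k ^ 2 + X k ^ 2 else 0)
            - 2 * (commonSum par R i k * R k + commonSum par X i k * X k)) e < 0 := by
          dsimp only
          by_cases h : Anc par i e
          · have h3 : R e * R e ≤ commonSum par R i e * R e :=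
              mul_le_mul_of_nonneg_right (hcRa e h) (hR e).le
            have h4 : X e * X e ≤ commonSum par X i e * X e :=
              mul_le_mul_of_nonneg_right (hcXa e h) (hX e).le
            rw [if_pos h]
            nlinarith [mul_pos (hR e) (hR e), mul_pos (hX e) (hX e)]
          · have h3 : R f * R e ≤ commonSum par R i e * R e :=
              mul_le_mul_of_nonneg_right hRf (hR e).le
            have h4 : 0 ≤ commonSum par X i e * X e := mul_nonneg (hcX e) (hX e).le
            rw [if_neg h]
            nlinarith [mul_pos (hR f) (hR e)]
        exact h3 hcDe ⟨j, hwPj⟩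
end

section
/- LinDistFlow underestimates line flows and overestimates nodal voltages. Let (P, Q, ν, ℓ) be any solution of the nonlinear DistFlow equations (power conservation with loss terms and voltage-drop equations) with ℓ_kl ≥ 0 for every edge, and let (P̂, Q̂, ν̂) be the LinDistFlow solution for the same consumptions (pt, qt) and the same substation voltage ν_0. Then P_ij ≥ P̂_ij and Q_ij ≥ Q̂_ij for every edge (i,j) ∈ E, and ν_j ≤ ν̂_j for every node j ∈ N; moreover ν_j < ν̂_j whenever ℓ_kl > 0 for some edge (k,l) ∈ 𝒫_j. -/
open Finset

/-- **LinDistFlow underestimates line flows and overestimates nodal voltages.**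
Let `(P, Q, ν, ℓ)` be any solution of the nonlinear DistFlow equations (power
conservation with loss terms, and voltage-drop equations) with `ℓ_kl ≥ 0` on every
edge, and let `(P̂, Q̂, ν̂)` be the LinDistFlow solution for the same consumptions
`(pt, qt)` and the same substation voltage `ν0`.  Then `P_ij ≥ P̂_ij` and
`Q_ij ≥ Q̂_ij` on every edge, and `ν_j ≤ ν̂_j` at every node; moreover `ν_j < ν̂_j`
whenever `ℓ_kl > 0` for some edge `(k,l) ∈ 𝒫_j`. -/
theorem lpf_bounds_npf {V : Type*} [Fintype V] (par : V → Option V)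
    (hacyc : Acyclic par) (R X : V → ℝ)
    (hR : ∀ e, 0 < R e) (hX : ∀ e, 0 < X e)
    (pt qt : V → ℝ) (ν0 : ℝ)
    (P Q ν ℓ : V → ℝ)
    (hP : ∀ j, P j = (∑ k ∈ childrenOf par j, P k) + pt j + R j * ℓ j)
    (hQ : ∀ j, Q j = (∑ k ∈ childrenOf par j, Q k) + qt j + X j * ℓ j)
    (hV : ∀ j, ν j = (par j).elim ν0 ν - 2 * (R j * P j + X j * Q j)
        + (R j ^ 2 + X j ^ 2) * ℓ j)
    (hℓ : ∀ e, 0 ≤ ℓ e)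
    (Phat Qhat νhat : V → ℝ)
    (hlpf : IsLPF par R X pt qt ν0 Phat Qhat νhat) :
    (∀ j, Phat j ≤ P j ∧ Qhat j ≤ Q j ∧ ν j ≤ νhat j) ∧
    (∀ j, (∃ e, Anc par j e ∧ 0 < ℓ e) → ν j < νhat j) := by
  classical
  obtain ⟨hPhat, hQhat, hνhat⟩ := hlpf
  -- well-foundedness of the child relation (k ≺ j iff par k = some j)
  have wfc : WellFounded (IsParent par) := by
    have : IsTrans V (Relation.TransGen (IsParent par)) := ⟨fun _ _ _ => Relation.TransGen.trans⟩
    have : IsIrrefl V (Relation.TransGen (IsParent par)) := ⟨hacyc⟩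
    have hwf : WellFounded (Relation.TransGen (IsParent par)) :=
      @Finite.wellFounded_of_trans_of_irrefl V _ _
        ⟨fun _ _ _ => Relation.TransGen.trans⟩ ⟨hacyc⟩
    exact hwf.mono (fun a b h => Relation.TransGen.single h)
  -- well-foundedness of the parent relation (i ≺ j iff par j = some i)
  have wfp : WellFounded (fun i j => IsParent par j i) := by
    have hwf : WellFounded (Relation.TransGen (fun i j => IsParent par j i)) :=
      @Finite.wellFounded_of_trans_of_irrefl V _ _
        ⟨fun _ _ _ => Relation.TransGen.trans⟩
        ⟨fun v hv => hacyc v ((Relation.transGen_swap).mpr hv)⟩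
    exact hwf.mono (fun a b h => Relation.TransGen.single h)
  -- flows: P j - Phat j ≥ R j * ℓ j ≥ 0, similarly for Q
  have hDP : ∀ j, R j * ℓ j ≤ P j - Phat j := by
    intro j
    induction j using wfc.induction with
    | _ j ih =>
      have hsum : (0:ℝ) ≤ ∑ k ∈ childrenOf par j, (P k - Phat k) := by
        apply Finset.sum_nonneg
        intro k hk
        have hk' : IsParent par k j := by
          simpa [childrenOf, IsParent] using hk
        exact le_trans (mul_nonneg (hR k).le (hℓ k)) (ih k hk')
      have : P j - Phat j = (∑ k ∈ childrenOf par j, (P k - Phat k)) + R j * ℓ j := by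
        rw [hP j, hPhat j, Finset.sum_sub_distrib]; ring
      linarith
  have hDQ : ∀ j, X j * ℓ j ≤ Q j - Qhat j := by
    intro j
    induction j using wfc.induction with
    | _ j ih =>
      have hsum : (0:ℝ) ≤ ∑ k ∈ childrenOf par j, (Q k - Qhat k) := by
        apply Finset.sum_nonneg
        intro k hk
        have hk' : IsParent par k j := by
          simpa [childrenOf, IsParent] using hk
        exact le_trans (mul_nonneg (hX k).le (hℓ k)) (ih k hk')
      have : Q j - Qhat j = (∑ k ∈ childrenOf par j, (Q k - Qhat k)) + X j * ℓ j := by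
        rw [hQ j, hQhat j, Finset.sum_sub_distrib]; ring
      linarith
  have hDP0 : ∀ j, 0 ≤ P j - Phat j := fun j =>
    le_trans (mul_nonneg (hR j).le (hℓ j)) (hDP j)
  have hDQ0 : ∀ j, 0 ≤ Q j - Qhat j := fun j =>
    le_trans (mul_nonneg (hX j).le (hℓ j)) (hDQ j)
  -- voltages
  have hDν : ∀ j, 0 ≤ νhat j - ν j ∧
      ((∃ e, Anc par j e ∧ 0 < ℓ e) → 0 < νhat j - ν j) := by
    intro j
    induction j using wfp.induction with
    | _ j ih =>
      have key : νhat j - ν j = ((par j).elim ν0 νhat - (par j).elim ν0 ν)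
          + 2 * (R j * (P j - Phat j) + X j * (Q j - Qhat j))
          - (R j ^ 2 + X j ^ 2) * ℓ j := by
        rw [hνhat j, hV j]; ring
      have hflow : 2 * ((R j ^ 2 + X j ^ 2) * ℓ j)
          ≤ 2 * (R j * (P j - Phat j) + X j * (Q j - Qhat j)) := by
        have h1 : R j * (R j * ℓ j) ≤ R j * (P j - Phat j) :=
          mul_le_mul_of_nonneg_left (hDP j) (hR j).le
        have h2 : X j * (X j * ℓ j) ≤ X j * (Q j - Qhat j) :=
          mul_le_mul_of_nonneg_left (hDQ j) (hX j).le
        nlinarith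
      have hloss0 : 0 ≤ (R j ^ 2 + X j ^ 2) * ℓ j :=
        mul_nonneg (by positivity) (hℓ j)
      have hpar0 : 0 ≤ (par j).elim ν0 νhat - (par j).elim ν0 ν := by
        cases hpj : par j with
        | none => simp
        | some i =>
          simpa using (ih i hpj).1
      refine ⟨by linarith, ?_⟩
      rintro ⟨e, hanc, hle⟩
      rcases Relation.ReflTransGen.cases_head hanc with heq | ⟨i, hji, hie⟩
      · subst heq
        have : 0 < (R j ^ 2 + X j ^ 2) * ℓ j :=
          mul_pos (by nlinarith [hR j, hX j]) hle
        linarith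
      · have hpj : par j = some i := hji
        have hi : 0 < νhat i - ν i := (ih i hpj).2 ⟨e, hie, hle⟩
        have : (par j).elim ν0 νhat - (par j).elim ν0 ν = νhat i - ν i := by
          simp [hpj]
        linarith
  refine ⟨fun j => ⟨by linarith [hDP0 j], by linarith [hDQ0 j], by linarith [(hDν j).1]⟩,
    fun j h => by linarith [(hDν j).2 h]⟩
end
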